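/- (Schur test, specific kernel) For fixed 0 ≤ a < 1, the integral kernel k(s₁, s₂) = (s₂ - a)^{-1} · 1_{s₂ > s₁} on [a, 1]² defines a bounded linear operator on L²([a, 1]) with operator norm at most 4. -/

import Mathlib

open MeasureTheory Set
open scoped ENNReal NNReal

noncomputable def Dk (a s : ℝ) : ℝ≥0∞ := (ENNReal.ofReal (s - a))⁻¹
noncomputable def Qw (a s : ℝ) : ℝ≥0∞ := Dk a s ^ (1/2 : ℝ)
noncomputable def KE (a s₁ s₂ : ℝ) : ℝ≥0∞ := if s₁ < s₂ then Dk a s₂ else 0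

lemma Dk_eq {a s : ℝ} (h : a < s) : Dk a s = ENNReal.ofReal ((s - a)⁻¹) := by
  rw [Dk, ENNReal.ofReal_inv_of_pos (sub_pos.2 h)]

lemma Qw_eq {a s : ℝ} (h : a < s) : Qw a s = ENNReal.ofReal ((s - a) ^ (-(1/2) : ℝ)) := by
  rw [Qw, Dk_eq h, ENNReal.ofReal_rpow_of_pos (inv_pos.2 (sub_pos.2 h)),
    ← Real.rpow_neg_one, ← Real.rpow_mul (sub_pos.2 h).le]
  norm_num

lemma Dk_mul_Qw {a s : ℝ} (h : a < s) :
    Dk a s * Qw a s = ENNReal.ofReal ((s - a) ^ (-(3/2) : ℝ)) := by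
  rw [Dk_eq h, Qw_eq h, ← ENNReal.ofReal_mul (inv_nonneg.2 (sub_pos.2 h).le),
    ← Real.rpow_neg_one (s-a), ← Real.rpow_add (sub_pos.2 h)]
  norm_num

lemma schurA {a s₁ : ℝ} (has : a < s₁) (hs1 : s₁ ≤ 1) :
    ∫⁻ s₂ in Icc a 1, KE a s₁ s₂ * Qw a s₂ ≤ 2 * Qw a s₁ := by
  have hset : Ioi s₁ ∩ Icc a 1 = Ioc s₁ 1 := by
    ext x
    simp only [mem_inter_iff, mem_Ioi, mem_Icc, mem_Ioc]
    exact ⟨fun ⟨h1, _, h3⟩ => ⟨h1, h3⟩, fun ⟨h1, h2⟩ => ⟨h1, (has.trans h1).le, h2⟩⟩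
  have h1 : ∀ s₂, KE a s₁ s₂ * Qw a s₂
      = (Ioi s₁).indicator (fun s₂ => Dk a s₂ * Qw a s₂) s₂ := by
    intro s₂
    by_cases h : s₁ < s₂ <;> simp [KE, indicator, h]
  simp only [h1]
  rw [lintegral_indicator measurableSet_Ioi, Measure.restrict_restrict measurableSet_Ioi, hset]
  have h2 : ∫⁻ s₂ in Ioc s₁ 1, Dk a s₂ * Qw a s₂
      = ∫⁻ s₂ in Ioc s₁ 1, ENNReal.ofReal ((s₂ - a) ^ (-(3/2) : ℝ)) := by
    refine setLIntegral_congr_fun measurableSet_Ioc (fun x hx => ?_)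
    exact Dk_mul_Qw (has.trans hx.1)
  rw [h2]
  have hcont : ContinuousOn (fun x : ℝ => (x - a) ^ (-(3/2) : ℝ)) (Icc s₁ 1) := by
    apply ContinuousOn.rpow_const
    · exact (continuous_id.sub continuous_const).continuousOn
    · intro x hx
      exact Or.inl (ne_of_gt (sub_pos.2 (has.trans_le hx.1)))
  have hint : IntegrableOn (fun x : ℝ => (x - a) ^ (-(3/2) : ℝ)) (Ioc s₁ 1) volume :=
    (hcont.integrableOn_Icc).mono_set Ioc_subset_Icc_self
  rw [← ofReal_integral_eq_lintegral_ofReal hint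
    ((ae_restrict_iff' measurableSet_Ioc).2 (ae_of_all _ fun x hx =>
      Real.rpow_nonneg (by linarith [hx.1]) _))]
  have hval : ∫ x in Ioc s₁ 1, (x - a) ^ (-(3/2) : ℝ)
      = 2 * (s₁ - a) ^ (-(1/2) : ℝ) - 2 * (1 - a) ^ (-(1/2) : ℝ) := by
    have hcomp := intervalIntegral.integral_comp_sub_right (a := s₁) (b := 1)
      (fun y : ℝ => y ^ (-(3/2) : ℝ)) a
    rw [← intervalIntegral.integral_of_le hs1, hcomp,
      integral_rpow (Or.inr ⟨by norm_num, notMem_uIcc_of_lt (by linarith) (by linarith)⟩)]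
    norm_num
    ring
  rw [hval, Qw_eq has]
  calc ENNReal.ofReal (2 * (s₁ - a) ^ (-(1/2) : ℝ) - 2 * (1 - a) ^ (-(1/2) : ℝ))
      ≤ ENNReal.ofReal (2 * (s₁ - a) ^ (-(1/2) : ℝ)) := by
        apply ENNReal.ofReal_le_ofReal
        have h0 : 0 ≤ (1 - a) ^ (-(1/2) : ℝ) := Real.rpow_nonneg (by linarith) _
        linarith
    _ = 2 * ENNReal.ofReal ((s₁ - a) ^ (-(1/2) : ℝ)) := by
        rw [ENNReal.ofReal_mul (by norm_num)]
        norm_num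

lemma schurB {a s₂ : ℝ} (has : a < s₂) (hs2 : s₂ ≤ 1) :
    ∫⁻ s₁ in Icc a 1, Qw a s₁ * KE a s₁ s₂ ≤ 2 * Qw a s₂ := by
  have hset : Iio s₂ ∩ Icc a 1 = Ico a s₂ := by
    ext x
    simp only [mem_inter_iff, mem_Iio, mem_Icc, mem_Ico]
    exact ⟨fun ⟨h1, h2, _⟩ => ⟨h2, h1⟩, fun ⟨h1, h2⟩ => ⟨h2, h1, h2.le.trans hs2⟩⟩
  have h1 : ∀ s₁, Qw a s₁ * KE a s₁ s₂
      = (Iio s₂).indicator (fun s₁ => Qw a s₁ * Dk a s₂) s₁ := by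
    intro s₁
    by_cases h : s₁ < s₂ <;> simp [KE, indicator, h]
  simp only [h1]
  rw [lintegral_indicator measurableSet_Iio, Measure.restrict_restrict measurableSet_Iio, hset,
    ← Measure.restrict_congr_set Ioo_ae_eq_Ico]
  have hQm : Measurable (Qw a) := by
    apply ENNReal.continuous_rpow_const.measurable.comp
    exact (ENNReal.measurable_ofReal.comp (measurable_id.sub measurable_const)).inv
  rw [lintegral_mul_const _ hQm]
  have h2 : ∫⁻ s₁ in Ioo a s₂, Qw a s₁
      = ∫⁻ s₁ in Ioo a s₂, ENNReal.ofReal ((s₁ - a) ^ (-(1/2) : ℝ)) := by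
    refine setLIntegral_congr_fun measurableSet_Ioo (fun x hx => ?_)
    exact Qw_eq hx.1
  rw [h2]
  have hint : IntegrableOn (fun x : ℝ => (x - a) ^ (-(1/2) : ℝ)) (Ioo a s₂) volume := by
    have := (intervalIntegral.intervalIntegrable_rpow' (a := 0) (b := s₂ - a)
      (r := -(1/2)) (by norm_num)).comp_sub_right a
    simp only [zero_add, sub_add_cancel] at this
    exact (intervalIntegrable_iff_integrableOn_Ioo_of_le (by linarith)).1 this
  rw [← ofReal_integral_eq_lintegral_ofReal hint
    ((ae_restrict_iff' measurableSet_Ioo).2 (ae_of_all _ fun x hx =>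
      Real.rpow_nonneg (by linarith [hx.1]) _))]
  have hval : ∫ x in Ioo a s₂, (x - a) ^ (-(1/2) : ℝ) = 2 * (s₂ - a) ^ ((1/2) : ℝ) := by
    rw [← integral_Ioc_eq_integral_Ioo, ← intervalIntegral.integral_of_le has.le]
    have hcomp := intervalIntegral.integral_comp_sub_right (a := a) (b := s₂)
      (fun y : ℝ => y ^ (-(1/2) : ℝ)) a
    rw [hcomp]
    simp only [sub_self]
    rw [integral_rpow (Or.inl (by norm_num))]
    rw [Real.zero_rpow (by norm_num)]
    norm_num
    ring
  rw [hval, Dk_eq has, Qw_eq has, ENNReal.ofReal_mul (by norm_num), mul_assoc,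
    ← ENNReal.ofReal_mul (Real.rpow_nonneg (by linarith) _),
    ← Real.rpow_neg_one (s₂ - a), ← Real.rpow_add (by linarith)]
  norm_num

lemma Dk_ne_zero (a s : ℝ) : Dk a s ≠ 0 := by
  simp [Dk, ENNReal.inv_ne_zero, ENNReal.ofReal_ne_top]

lemma Qw_ne_zero' (a s : ℝ) : Qw a s ≠ 0 := by
  simp [Qw, ENNReal.rpow_eq_zero_iff, Dk_ne_zero a s]

lemma Qw_ne_top {a s : ℝ} (h : a < s) : Qw a s ≠ ⊤ := by
  rw [Qw_eq h]; exact ENNReal.ofReal_ne_top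

lemma Dk_measurable (a : ℝ) : Measurable (Dk a) :=
  (ENNReal.measurable_ofReal.comp (measurable_id.sub measurable_const)).inv

lemma Qw_measurable (a : ℝ) : Measurable (Qw a) :=
  ENNReal.continuous_rpow_const.measurable.comp (Dk_measurable a)

lemma KE_measurable (a : ℝ) : Measurable (fun p : ℝ × ℝ => KE a p.1 p.2) :=
  Measurable.ite (measurableSet_lt measurable_fst measurable_snd)
    ((Dk_measurable a).comp measurable_snd) measurable_const

lemma KE_measurable₂ (a s₁ : ℝ) : Measurable (KE a s₁) :=
  (KE_measurable a).comp (measurable_const.prodMk measurable_id)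

lemma rpow_two_eq (x : ℝ≥0∞) : x ^ (2:ℝ) = x * x := by
  rw [show (2:ℝ) = ((2:ℕ):ℝ) by norm_num, ENNReal.rpow_natCast, sq]

lemma ae_Ioc (a : ℝ) : ∀ᵐ s ∂(volume.restrict (Icc a 1)), s ∈ Ioc a 1 := by
  have h1 : ∀ᵐ s ∂(volume.restrict (Icc a 1)), s ∈ Icc a 1 :=
    ae_restrict_mem measurableSet_Icc
  have h2 : ∀ᵐ s ∂(volume.restrict (Icc a 1)), s ≠ a := by
    rw [ae_iff]
    have : {s : ℝ | ¬ s ≠ a} = {a} := by ext x; simp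
    rw [this]
    exact le_antisymm ((Measure.restrict_apply_le _ _).trans_eq (measure_singleton a)) (zero_le)
  filter_upwards [h1, h2] with s hs hne
  exact ⟨lt_of_le_of_ne hs.1 (Ne.symm hne), hs.2⟩

lemma schur_est (a : ℝ) (F : ℝ → ℝ≥0∞)
    (hF : AEMeasurable F (volume.restrict (Icc a 1))) :
    ∫⁻ s₁ in Icc a 1, (∫⁻ s₂ in Icc a 1, KE a s₁ s₂ * F s₂) ^ (2:ℝ)
      ≤ 4 * ∫⁻ s in Icc a 1, F s ^ (2:ℝ) := by
  set μ := volume.restrict (Icc a 1) with hμ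
  set G : ℝ → ℝ≥0∞ := fun s₂ => (Qw a s₂)⁻¹ * F s₂ ^ (2:ℝ) with hG
  set B : ℝ → ℝ≥0∞ := fun s₁ => ∫⁻ s₂ in Icc a 1, KE a s₁ s₂ * G s₂ with hB
  have hFsq : AEMeasurable (fun s => F s ^ (2:ℝ)) μ :=
    ENNReal.continuous_rpow_const.measurable.comp_aemeasurable hF
  have hGm : AEMeasurable G μ := ((Qw_measurable a).inv.aemeasurable).mul hFsq
  -- Step 1: pointwise Cauchy–Schwarz bound
  have step1 : ∀ s₁ ∈ Ioc a 1,
      (∫⁻ s₂ in Icc a 1, KE a s₁ s₂ * F s₂) ^ (2:ℝ) ≤ 2 * Qw a s₁ * B s₁ := by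
    intro s₁ hs₁
    set u : ℝ → ℝ≥0∞ := fun s₂ => (KE a s₁ s₂ * Qw a s₂) ^ ((1/2):ℝ) with hu
    set v : ℝ → ℝ≥0∞ := fun s₂ => (KE a s₁ s₂ * G s₂) ^ ((1/2):ℝ) with hv
    have huv : ∀ s₂, KE a s₁ s₂ * F s₂ = u s₂ * v s₂ := by
      intro s₂
      by_cases h : s₁ < s₂
      · have hs₂ : a < s₂ := hs₁.1.trans h
        simp only [hu, hv, hG, KE, if_pos h]
        rw [← ENNReal.mul_rpow_of_nonneg _ _ (by norm_num : (0:ℝ) ≤ 1/2)]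
        have key : Dk a s₂ * Qw a s₂ * (Dk a s₂ * ((Qw a s₂)⁻¹ * F s₂ ^ (2:ℝ)))
            = (Dk a s₂ * F s₂) ^ (2:ℝ) := by
          rw [rpow_two_eq, rpow_two_eq]
          calc Dk a s₂ * Qw a s₂ * (Dk a s₂ * ((Qw a s₂)⁻¹ * (F s₂ * F s₂)))
              = (Qw a s₂ * (Qw a s₂)⁻¹) * (Dk a s₂ * F s₂ * (Dk a s₂ * F s₂)) := by ring
            _ = Dk a s₂ * F s₂ * (Dk a s₂ * F s₂) := by
                rw [ENNReal.mul_inv_cancel (Qw_ne_zero' a s₂) (Qw_ne_top hs₂), one_mul]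
        rw [key, ← ENNReal.rpow_mul]
        norm_num
      · simp [hu, hv, KE, if_neg h]
    have hum : AEMeasurable u μ :=
      (ENNReal.continuous_rpow_const.measurable.comp
        ((KE_measurable₂ a s₁).mul (Qw_measurable a))).aemeasurable
    have hvm : AEMeasurable v μ :=
      ENNReal.continuous_rpow_const.measurable.comp_aemeasurable
        ((KE_measurable₂ a s₁).aemeasurable.mul hGm)
    have hCS := ENNReal.lintegral_mul_le_Lp_mul_Lq μ
      Real.HolderConjugate.two_two hum hvm
    have hu2 : ∫⁻ s₂, u s₂ ^ (2:ℝ) ∂μ = ∫⁻ s₂ in Icc a 1, KE a s₁ s₂ * Qw a s₂ := by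
      rw [hμ]
      refine lintegral_congr fun s₂ => ?_
      rw [hu, ← ENNReal.rpow_mul]
      norm_num
    have hv2 : ∫⁻ s₂, v s₂ ^ (2:ℝ) ∂μ = B s₁ := by
      rw [hB, hμ]
      refine lintegral_congr fun s₂ => ?_
      rw [hv, ← ENNReal.rpow_mul]
      norm_num
    have hA : ∫⁻ s₂ in Icc a 1, KE a s₁ s₂ * F s₂
        ≤ (∫⁻ s₂ in Icc a 1, KE a s₁ s₂ * Qw a s₂) ^ ((1/2):ℝ) * (B s₁) ^ ((1/2):ℝ) := by
      calc ∫⁻ s₂ in Icc a 1, KE a s₁ s₂ * F s₂ = ∫⁻ s₂, (u * v) s₂ ∂μ := by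
            rw [hμ]; exact lintegral_congr fun s₂ => huv s₂
        _ ≤ (∫⁻ s₂, u s₂ ^ (2:ℝ) ∂μ) ^ ((1/2):ℝ) * (∫⁻ s₂, v s₂ ^ (2:ℝ) ∂μ) ^ ((1/2):ℝ) := hCS
        _ = _ := by rw [hu2, hv2]
    calc (∫⁻ s₂ in Icc a 1, KE a s₁ s₂ * F s₂) ^ (2:ℝ)
        ≤ ((∫⁻ s₂ in Icc a 1, KE a s₁ s₂ * Qw a s₂) ^ ((1/2):ℝ) * (B s₁) ^ ((1/2):ℝ)) ^ (2:ℝ) :=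
          ENNReal.rpow_le_rpow hA (by norm_num)
      _ = (∫⁻ s₂ in Icc a 1, KE a s₁ s₂ * Qw a s₂) * B s₁ := by
          rw [ENNReal.mul_rpow_of_nonneg _ _ (by norm_num : (0:ℝ) ≤ 2),
            ← ENNReal.rpow_mul, ← ENNReal.rpow_mul]
          norm_num
      _ ≤ 2 * Qw a s₁ * B s₁ :=
          mul_le_mul_left (schurA hs₁.1 hs₁.2) _
  -- Step 2: integrate, swap order, apply schurB
  set H : ℝ → ℝ → ℝ≥0∞ := fun s₁ s₂ => 2 * Qw a s₁ * (KE a s₁ s₂ * G s₂) with hH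
  have step2 : ∫⁻ s₁ in Icc a 1, (∫⁻ s₂ in Icc a 1, KE a s₁ s₂ * F s₂) ^ (2:ℝ)
      ≤ ∫⁻ s₁, ∫⁻ s₂, H s₁ s₂ ∂μ ∂μ := by
    refine lintegral_mono_ae ?_
    filter_upwards [ae_Ioc a] with s₁ hs₁
    refine (step1 s₁ hs₁).trans (le_of_eq ?_)
    rw [hB, hμ, ← lintegral_const_mul' (2 * Qw a s₁) _
      (ENNReal.mul_ne_top (by norm_num) (Qw_ne_top hs₁.1))]
  have hswap : ∫⁻ s₁, ∫⁻ s₂, H s₁ s₂ ∂μ ∂μ = ∫⁻ s₂, ∫⁻ s₁, H s₁ s₂ ∂μ ∂μ := by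
    refine lintegral_lintegral_swap ?_
    have hF2 : AEMeasurable (fun p : ℝ × ℝ => F p.2) (μ.prod μ) :=
      hF.comp_quasiMeasurePreserving Measure.quasiMeasurePreserving_snd
    have hG2 : AEMeasurable (fun p : ℝ × ℝ => G p.2) (μ.prod μ) := by
      refine (((Qw_measurable a).inv.comp measurable_snd).aemeasurable).mul ?_
      exact ENNReal.continuous_rpow_const.measurable.comp_aemeasurable hF2
    exact ((measurable_const.mul ((Qw_measurable a).comp measurable_fst)).aemeasurable).mul
      ((KE_measurable a).aemeasurable.mul hG2)
  have step3 : ∫⁻ s₂, ∫⁻ s₁, H s₁ s₂ ∂μ ∂μ ≤ ∫⁻ s₂ in Icc a 1, 4 * F s₂ ^ (2:ℝ) := by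
    rw [hμ]
    refine lintegral_mono_ae ?_
    filter_upwards [ae_Ioc a] with s₂ hs₂
    have hinner : ∫⁻ s₁, H s₁ s₂ ∂μ
        = (∫⁻ s₁ in Icc a 1, Qw a s₁ * KE a s₁ s₂) * (2 * G s₂) := by
      have hm : AEMeasurable (fun s₁ => Qw a s₁ * KE a s₁ s₂) μ :=
        ((Qw_measurable a).mul (((KE_measurable a).comp
          (measurable_id.prodMk measurable_const)) : Measurable fun s₁ => KE a s₁ s₂)).aemeasurable
      rw [hμ, ← lintegral_mul_const'' _ hm]
      refine lintegral_congr fun s₁ => ?_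
      rw [hH]
      ring
    rw [hinner]
    calc (∫⁻ s₁ in Icc a 1, Qw a s₁ * KE a s₁ s₂) * (2 * G s₂)
        ≤ (2 * Qw a s₂) * (2 * G s₂) := mul_le_mul_left (schurB hs₂.1 hs₂.2) _
      _ = 4 * ((Qw a s₂ * (Qw a s₂)⁻¹) * F s₂ ^ (2:ℝ)) := by rw [hG]; ring
      _ = 4 * F s₂ ^ (2:ℝ) := by
          rw [ENNReal.mul_inv_cancel (Qw_ne_zero' a s₂) (Qw_ne_top hs₂.1), one_mul]
  calc ∫⁻ s₁ in Icc a 1, (∫⁻ s₂ in Icc a 1, KE a s₁ s₂ * F s₂) ^ (2:ℝ)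
      ≤ ∫⁻ s₁, ∫⁻ s₂, H s₁ s₂ ∂μ ∂μ := step2
    _ = ∫⁻ s₂, ∫⁻ s₁, H s₁ s₂ ∂μ ∂μ := hswap
    _ ≤ ∫⁻ s₂ in Icc a 1, 4 * F s₂ ^ (2:ℝ) := step3
    _ = 4 * ∫⁻ s in Icc a 1, F s ^ (2:ℝ) := lintegral_const_mul' _ _ (by norm_num)

noncomputable def kR (a s₁ s₂ : ℝ) : ℝ := if s₁ < s₂ then (s₂ - a)⁻¹ else 0
noncomputable def Tf (a : ℝ) (f : ℝ → ℝ) (s₁ : ℝ) : ℝ := ∫ s₂ in Icc a 1, kR a s₁ s₂ * f s₂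

lemma kR_measurable (a : ℝ) : Measurable (fun p : ℝ × ℝ => kR a p.1 p.2) :=
  Measurable.ite (measurableSet_lt measurable_fst measurable_snd)
    ((measurable_snd.sub measurable_const).inv) measurable_const

lemma kR_enorm {a s₁ : ℝ} (h1 : a ≤ s₁) (s₂ : ℝ) :
    (‖kR a s₁ s₂‖₊ : ℝ≥0∞) = KE a s₁ s₂ := by
  by_cases h : s₁ < s₂
  · simp only [kR, KE, if_pos h]
    rw [← enorm_eq_nnnorm, Real.enorm_eq_ofReal (inv_nonneg.2 (by linarith)), Dk_eq (lt_of_le_of_lt h1 h)]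
  · simp [kR, KE, h]

instance fin_meas (a : ℝ) : IsFiniteMeasure (volume.restrict (Icc a (1:ℝ))) := by
  constructor
  rw [Measure.restrict_apply MeasurableSet.univ, univ_inter, Real.volume_Icc]
  exact ENNReal.ofReal_lt_top

lemma Tf_aesm (a : ℝ) (f : ℝ → ℝ)
    (hf : AEStronglyMeasurable f (volume.restrict (Icc a 1))) :
    AEStronglyMeasurable (Tf a f) (volume.restrict (Icc a 1)) := by
  apply AEStronglyMeasurable.integral_prod_right'
    (f := fun p : ℝ × ℝ => kR a p.1 p.2 * f p.2)
  exact ((kR_measurable a).aestronglyMeasurable).mul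
    (hf.comp_quasiMeasurePreserving Measure.quasiMeasurePreserving_snd)

lemma Tf_eLpNorm_le (a : ℝ) (f : ℝ → ℝ)
    (hf : AEStronglyMeasurable f (volume.restrict (Icc a 1))) :
    eLpNorm (Tf a f) 2 (volume.restrict (Icc a 1))
      ≤ 2 * eLpNorm f 2 (volume.restrict (Icc a 1)) := by
  rw [eLpNorm_eq_lintegral_rpow_enorm_toReal two_ne_zero ENNReal.ofNat_ne_top,
    eLpNorm_eq_lintegral_rpow_enorm_toReal two_ne_zero ENNReal.ofNat_ne_top]
  simp only [ENNReal.toReal_ofNat, enorm_eq_nnnorm]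
  have key : ∫⁻ s₁ in Icc a 1, (‖Tf a f s₁‖₊ : ℝ≥0∞) ^ (2:ℝ)
      ≤ 4 * ∫⁻ s in Icc a 1, (‖f s‖₊ : ℝ≥0∞) ^ (2:ℝ) := by
    refine le_trans ?_ (schur_est a (fun s => (‖f s‖₊ : ℝ≥0∞)) hf.enorm)
    refine lintegral_mono_ae ?_
    filter_upwards [ae_Ioc a] with s₁ hs₁
    refine ENNReal.rpow_le_rpow ?_ (by norm_num)
    calc (‖Tf a f s₁‖₊ : ℝ≥0∞)
        ≤ ∫⁻ s₂ in Icc a 1, ‖kR a s₁ s₂ * f s₂‖₊ := enorm_integral_le_lintegral_enorm _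
      _ = ∫⁻ s₂ in Icc a 1, KE a s₁ s₂ * ‖f s₂‖₊ := by
          refine lintegral_congr fun s₂ => ?_
          rw [nnnorm_mul, ENNReal.coe_mul, kR_enorm hs₁.1.le s₂]
  calc (∫⁻ s₁ in Icc a 1, (‖Tf a f s₁‖₊ : ℝ≥0∞) ^ (2:ℝ)) ^ ((1:ℝ)/2)
      ≤ (4 * ∫⁻ s in Icc a 1, (‖f s‖₊ : ℝ≥0∞) ^ (2:ℝ)) ^ ((1:ℝ)/2) :=
        ENNReal.rpow_le_rpow key (by norm_num)
    _ = 2 * (∫⁻ s in Icc a 1, (‖f s‖₊ : ℝ≥0∞) ^ (2:ℝ)) ^ ((1:ℝ)/2) := by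
        rw [ENNReal.mul_rpow_of_nonneg _ _ (by norm_num : (0:ℝ) ≤ 1/2)]
        congr 1
        rw [show (4:ℝ≥0∞) = (2:ℝ≥0∞) ^ (2:ℕ) by norm_num, ← ENNReal.rpow_natCast,
          ← ENNReal.rpow_mul]
        norm_num

lemma Tf_integrable (a : ℝ) (f : ℝ → ℝ) (hf : MemLp f 2 (volume.restrict (Icc a 1)))
    {s₁ : ℝ} (hs₁ : s₁ ∈ Ioc a 1) :
    Integrable (fun s₂ => kR a s₁ s₂ * f s₂) (volume.restrict (Icc a 1)) := by
  refine Integrable.bdd_mul (hf.integrable one_le_two) ?_ (c := (s₁ - a)⁻¹) (ae_of_all _ fun s₂ => ?_)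
  · exact (((kR_measurable a).comp (measurable_const.prodMk measurable_id)) :
      Measurable fun s₂ => kR a s₁ s₂).aestronglyMeasurable
  · by_cases h : s₁ < s₂
    · simp only [kR, if_pos h]
      rw [Real.norm_eq_abs, abs_of_nonneg (inv_nonneg.2 (by linarith [hs₁.1]))]
      exact inv_anti₀ (sub_pos.2 hs₁.1) (by linarith)
    · simp only [kR, if_neg h, norm_zero]
      exact inv_nonneg.2 (by linarith [hs₁.1])

lemma Tf_congr_ae {a : ℝ} {f g : ℝ → ℝ} (h : f =ᵐ[volume.restrict (Icc a 1)] g) :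
    Tf a f = Tf a g :=
  funext fun s₁ => integral_congr_ae (h.mono fun s₂ hs => by simp only []; rw [hs])

theorem schur_kernel_bounded (a : ℝ) (ha0 : 0 ≤ a) (ha1 : a < 1) :
    ∃ T : Lp ℝ 2 (volume.restrict (Icc a 1)) →L[ℝ] Lp ℝ 2 (volume.restrict (Icc a 1)),
      ‖T‖ ≤ 4 ∧
      ∀ f : Lp ℝ 2 (volume.restrict (Icc a 1)),
        ∀ᵐ s₁ ∂(volume.restrict (Icc a 1)),
          T f s₁ = ∫ s₂ in Icc a 1,
            (if s₁ < s₂ then (s₂ - a)⁻¹ else 0) * f s₂ := by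
  set μ := volume.restrict (Icc a (1:ℝ)) with hμ
  have hmem : ∀ f : Lp ℝ 2 μ, MemLp (Tf a f) 2 μ := fun f =>
    ⟨Tf_aesm a f (Lp.aestronglyMeasurable f),
      lt_of_le_of_lt (Tf_eLpNorm_le a f (Lp.aestronglyMeasurable f))
        (ENNReal.mul_lt_top (by norm_num) (Lp.eLpNorm_lt_top f))⟩
  set L : Lp ℝ 2 μ →ₗ[ℝ] Lp ℝ 2 μ :=
    { toFun := fun f => (hmem f).toLp (Tf a f)
      map_add' := by
        intro f g
        have h1 : Tf a ⇑(f + g) = Tf a (⇑f + ⇑g) := Tf_congr_ae (Lp.coeFn_add f g)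
        have h2 : Tf a (⇑f + ⇑g) =ᵐ[μ] Tf a ⇑f + Tf a ⇑g := by
          filter_upwards [ae_Ioc a] with s₁ hs₁
          simp only [Tf, Pi.add_apply, mul_add]
          exact integral_add (Tf_integrable a f (Lp.memLp f) hs₁)
            (Tf_integrable a g (Lp.memLp g) hs₁)
        refine (MemLp.toLp_congr _ ((hmem f).add (hmem g)) (h1 ▸ h2)).trans ?_
        exact MemLp.toLp_add (hmem f) (hmem g)
      map_smul' := by
        intro c f
        have h1 : Tf a ⇑(c • f) = Tf a (c • ⇑f) := Tf_congr_ae (Lp.coeFn_smul c f)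
        have h2 : Tf a (c • ⇑f) = c • Tf a ⇑f := by
          funext s₁
          simp only [Tf, Pi.smul_apply, smul_eq_mul]
          rw [← integral_const_mul]
          congr 1
          funext s₂
          ring
        simp only [RingHom.id_apply]
        refine (MemLp.toLp_congr _ ((hmem f).const_smul c)
          (Filter.EventuallyEq.of_eq (h1.trans h2))).trans ?_
        exact MemLp.toLp_const_smul c (hmem f) } with hL
  have hbound : ∀ f : Lp ℝ 2 μ, ‖L f‖ ≤ 4 * ‖f‖ := by
    intro f
    have h1 : ‖L f‖ = (eLpNorm (Tf a f) 2 μ).toReal := Lp.norm_toLp _ (hmem f)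
    have h2 : eLpNorm (Tf a ⇑f) 2 μ ≤ 2 * eLpNorm (⇑f) 2 μ :=
      Tf_eLpNorm_le a f (Lp.aestronglyMeasurable f)
    rw [h1, Lp.norm_def]
    calc (eLpNorm (Tf a ⇑f) 2 μ).toReal
        ≤ (2 * eLpNorm (⇑f) 2 μ).toReal := ENNReal.toReal_mono
          (ENNReal.mul_ne_top ENNReal.ofNat_ne_top (Lp.eLpNorm_ne_top f)) h2
      _ = 2 * (eLpNorm (⇑f) 2 μ).toReal := by
          rw [ENNReal.toReal_mul, ENNReal.toReal_ofNat]
      _ ≤ 4 * (eLpNorm (⇑f) 2 μ).toReal := by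
          have := ENNReal.toReal_nonneg (a := eLpNorm (⇑f) 2 μ)
          linarith
  refine ⟨L.mkContinuous 4 hbound, L.mkContinuous_norm_le (by norm_num) hbound, ?_⟩
  intro f
  have : (L.mkContinuous 4 hbound) f = (hmem f).toLp (Tf a f) := rfl
  rw [this]
  filter_upwards [MemLp.coeFn_toLp (hmem f)] with s₁ hs₁
  rw [hs₁]
  rfl
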